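/- There exists a nonzero polynomial g in 6 real variables such that for all b, b' ∈ ℝ⁶ with g(b) ≠ 0 and g(b') ≠ 0: if the slowness polynomials P_b = det(Γ_b − I₂) and P_{b'} = det(Γ_{b'} − I₂) are equal as elements of ℝ[p₁,p₂], then b = b'. In other words, in dimension 2 the map sending a stiffness tensor to its slowness polynomial is generically injective. -/

import Mathlib

open MvPolynomial Matrix

/-- The Christoffel matrix of a two-dimensional stiffness tensor with Voigt parameters
`b = (b11,b12,b13,b22,b23,b33)` (indexed `0,…,5`), with polynomial entries in `ℝ[p₁,p₂]`
(where `p₁ = X 0`, `p₂ = X 1`). -/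
noncomputable def christoffel2R (b : Fin 6 → ℝ) :
    Matrix (Fin 2) (Fin 2) (MvPolynomial (Fin 2) ℝ) :=
  !![C (b 0) * X 0 ^ 2 + C (2 * b 2) * X 0 * X 1 + C (b 5) * X 1 ^ 2,
     C (b 2) * X 0 ^ 2 + C (b 5 + b 1) * X 0 * X 1 + C (b 4) * X 1 ^ 2;
     C (b 2) * X 0 ^ 2 + C (b 5 + b 1) * X 0 * X 1 + C (b 4) * X 1 ^ 2,
     C (b 5) * X 0 ^ 2 + C (2 * b 4) * X 0 * X 1 + C (b 3) * X 1 ^ 2]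

/-- The slowness polynomial `P_b = det(Γ_b − I₂) ∈ ℝ[p₁,p₂]`. -/
noncomputable def slownessPoly2R (b : Fin 6 → ℝ) : MvPolynomial (Fin 2) ℝ :=
  (christoffel2R b - 1).det

/-- Auxiliary cubic discriminant-type polynomial used in the genericity condition. -/
noncomputable def Hpoly2R : MvPolynomial (Fin 6) ℝ :=
  (X 0 - X 3) * (X 0 * X 4 + X 2 * X 3 - X 1 * (X 2 + X 4) - 2 * X 5 * (X 2 + X 4))
    + 2 * (X 2 + X 4) ^ 2 * (X 2 - X 4)

/-- The genericity polynomial. -/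
noncomputable def gpoly2R : MvPolynomial (Fin 6) ℝ :=
  (X 2 + X 4) * ((X 0 - X 3) * Hpoly2R)

lemma eval_gpoly2R (b : Fin 6 → ℝ) :
    eval b gpoly2R = (b 2 + b 4) * ((b 0 - b 3) *
      ((b 0 - b 3) * (b 0 * b 4 + b 2 * b 3 - b 1 * (b 2 + b 4) - 2 * b 5 * (b 2 + b 4))
        + 2 * (b 2 + b 4) ^ 2 * (b 2 - b 4))) := by
  simp only [gpoly2R, Hpoly2R, _root_.map_mul, map_add, map_sub, map_pow, map_ofNat, eval_X]

lemma slowness_eval2R (b : Fin 6 → ℝ) (p q : ℝ) :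
    eval ![p,q] (slownessPoly2R b) =
      (b 0*p^2 + 2*b 2*p*q + b 5*q^2 - 1) * (b 5*p^2 + 2*b 4*p*q + b 3*q^2 - 1)
      - (b 2*p^2 + (b 5 + b 1)*p*q + b 4*q^2)^2 := by
  simp [slownessPoly2R, christoffel2R, Matrix.det_fin_two, Matrix.sub_apply, Matrix.one_apply]
  ring

/-- In dimension 2, the map from a stiffness tensor to its slowness
polynomial is generically injective. -/
theorem generic_injectivity_2D :
    ∃ g : MvPolynomial (Fin 6) ℝ, g ≠ 0 ∧
      ∀ b b' : Fin 6 → ℝ, eval b g ≠ 0 → eval b' g ≠ 0 →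
        slownessPoly2R b = slownessPoly2R b' → b = b' := by
  refine ⟨gpoly2R, ?_, ?_⟩
  · intro h
    have h2 := congrArg (eval ![(1:ℝ),0,1,0,0,0]) h
    rw [eval_gpoly2R] at h2
    norm_num [show (![(1:ℝ),0,1,0,0,0]) 5 = 0 from rfl, show (![(1:ℝ),0,1,0,0,0]) 2 = 1 from rfl,
      show (![(1:ℝ),0,1,0,0,0]) 3 = 0 from rfl, show (![(1:ℝ),0,1,0,0,0]) 4 = 0 from rfl] at h2
  · intro b b' hgb hgb' hP
    rw [eval_gpoly2R, mul_ne_zero_iff, mul_ne_zero_iff] at hgb hgb'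
    have hs2a := hgb.1
    have hDa := hgb.2.1
    have hHa := hgb.2.2
    -- evaluation equalities at eight points
    have e0 := congrArg (eval ![(1:ℝ),0]) hP
    have e1 := congrArg (eval ![(2:ℝ),0]) hP
    have e2 := congrArg (eval ![(0:ℝ),1]) hP
    have e3 := congrArg (eval ![(0:ℝ),2]) hP
    have e4 := congrArg (eval ![(1:ℝ),1]) hP
    have e5 := congrArg (eval ![(2:ℝ),2]) hP
    have e6 := congrArg (eval ![(1:ℝ),-1]) hP
    have e7 := congrArg (eval ![(2:ℝ),-2]) hP
    rw [slowness_eval2R, slowness_eval2R] at e0 e1 e2 e3 e4 e5 e6 e7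
    -- basic invariants
    have hs1 : b 0 + b 5 = b' 0 + b' 5 := by
      linear_combination (-(4:ℝ)/3) * e0 + ((1:ℝ)/12) * e1
    have hs3 : b 3 + b 5 = b' 3 + b' 5 := by
      linear_combination (-(4:ℝ)/3) * e2 + ((1:ℝ)/12) * e3
    have hs2 : b 2 + b 4 = b' 2 + b' 4 := by
      linear_combination ((2:ℝ)/3)*e0 - ((1:ℝ)/24)*e1 + ((2:ℝ)/3)*e2 - ((1:ℝ)/24)*e3
        - ((2:ℝ)/3)*e4 + ((1:ℝ)/24)*e5
    have h40 : b 0 * b 5 - b 2 ^ 2 = b' 0 * b' 5 - b' 2 ^ 2 := by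
      linear_combination (-(1:ℝ)/3)*e0 + ((1:ℝ)/12)*e1
    have h04 : b 3 * b 5 - b 4 ^ 2 = b' 3 * b' 5 - b' 4 ^ 2 := by
      linear_combination (-(1:ℝ)/3)*e2 + ((1:ℝ)/12)*e3
    have hsd : (b 0*b 4 - b 2*b 1) + (b 2*b 3 - b 4*b 1)
        = (b' 0*b' 4 - b' 2*b' 1) + (b' 2*b' 3 - b' 4*b' 1) := by
      linear_combination ((1:ℝ)/12)*e6 - ((1:ℝ)/48)*e7 - ((1:ℝ)/12)*e4 + ((1:ℝ)/48)*e5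
    have h22 : b 0*b 3 + 2*b 2*b 4 - 2*b 5*b 1 - b 1^2
        = b' 0*b' 3 + 2*b' 2*b' 4 - 2*b' 5*b' 1 - b' 1^2 := by
      linear_combination ((1:ℝ)/24)*e5 - ((1:ℝ)/6)*e4 + ((1:ℝ)/24)*e7 - ((1:ℝ)/6)*e6
        - ((1:ℝ)/12)*e1 + ((1:ℝ)/3)*e0 - ((1:ℝ)/12)*e3 + ((1:ℝ)/3)*e2
    have hD : b 0 - b 3 = b' 0 - b' 3 := by linear_combination hs1 - hs3
    -- derived relations
    have F1 : (b 0 - b 3) * (b 5 - b' 5)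
        = (b 2 + b 4) * ((b 2 - b 4) - (b' 2 - b' 4)) := by
      linear_combination h40 - h04 - b' 5 * hD + (b' 2 - b' 4) * hs2
    have F2 : 2*(b 2 + b 4)*((b 5 + b 1) - (b' 5 + b' 1))
        + (b 0 - b 3)*((b 2 - b 4) - (b' 2 - b' 4)) = 0 := by
      linear_combination (2*(b 2 + b 4))*hs1 + (2*(b' 0 + b' 5))*hs2 - 2*hsd
        - (b 2 + b 4)*hD - (b' 0 - b' 3)*hs2 - (2*(b' 5 + b' 1))*hs2 - (b' 2 - b' 4)*hD
    have F3 : (b 5 + b 1)^2 + (b 2 - b 4)^2 = (b' 5 + b' 1)^2 + (b' 2 - b' 4)^2 := by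
      linear_combination (b 3 + b 5)*hs1 + (b' 0 + b' 5)*hs3 - h22 - h40 - h04
    have G1 : ((b 2 - b 4) - (b' 2 - b' 4)) * ((b 0 - b 3)*((b 5 + b 1) + (b' 5 + b' 1))
        - 2*(b 2 + b 4)*((b 2 - b 4) + (b' 2 - b' 4))) = 0 := by
      linear_combination ((b 5 + b 1) + (b' 5 + b' 1))*F2 - (2*(b 2 + b 4))*F3
    have S2 : 2*(b 2 + b 4)*(b' 5 + b' 1) - (2*(b 0 + b 5)*(b 2 + b 4)
        - 2*((b 0*b 4 - b 2*b 1) + (b 2*b 3 - b 4*b 1))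
        - (b 0 - b 3)*(b' 2 - b' 4) - (b 0 - b 3)*(b 2 + b 4)) = 0 := by
      linear_combination (2*(b' 5 + b' 1))*hs2 - (2*(b 2 + b 4))*hs1
        - (2*(b' 0 + b' 5))*hs2 + 2*hsd + (b' 2 - b' 4)*hD + (b 2 + b 4)*hD
        + (b' 0 - b' 3)*hs2
    have G1p : ((b 2 - b 4) - (b' 2 - b' 4)) * ((b 0 - b 3)*(4*(b 0 + b 5)*(b 2 + b 4)
        - 4*((b 0*b 4 - b 2*b 1) + (b 2*b 3 - b 4*b 1))
        - (b 0 - b 3)*((b 2 - b 4) + (b' 2 - b' 4)) - 2*(b 0 - b 3)*(b 2 + b 4))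
        - 4*(b 2 + b 4)^2*((b 2 - b 4) + (b' 2 - b' 4))) = 0 := by
      linear_combination (2*(b 2 + b 4))*G1
        - (((b 2 - b 4) - (b' 2 - b' 4))*(b 0 - b 3))*S2
    have D4 : 4*(b 0 + b 5)*(b 5 - b' 5) - 4*(b 5^2 - b' 5^2)
        - ((b 2 - b 4) + (b 2 + b 4))^2 + ((b' 2 - b' 4) + (b 2 + b 4))^2 = 0 := by
      linear_combination 4*h40 - (4*b' 5)*hs1
        + (2*(b' 2 - b' 4) + (b 2 + b 4) + (b' 2 + b' 4))*hs2
    have G2 : ((b 2 - b 4) - (b' 2 - b' 4)) * (4*(b 0 + b 5)*(b 2 + b 4)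
        - 4*(b 2 + b 4)*(b 5 + b' 5) - (b 0 - b 3)*((b 2 - b 4) + (b' 2 - b' 4))
        - 2*(b 0 - b 3)*(b 2 + b 4)) = 0 := by
      linear_combination (b 0 - b 3)*D4 - (4*(b 0 + b 5) - 4*(b 5 + b' 5))*F1
    have S1 : (b 0 - b 3)*(b 5 + b' 5) - (2*((b 0*b 5 - b 2^2) - (b 3*b 5 - b 4^2))
        + (b 2 + b 4)*((b 2 - b 4) + (b' 2 - b' 4))) = 0 := by
      linear_combination b' 5*hD - (b' 2 - b' 4)*hs2 - h40 + h04
    have G2p : ((b 2 - b 4) - (b' 2 - b' 4)) * (4*(b 0 - b 3)*(b 0 + b 5)*(b 2 + b 4)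
        - 8*(b 2 + b 4)*((b 0*b 5 - b 2^2) - (b 3*b 5 - b 4^2))
        - 4*(b 2 + b 4)^2*((b 2 - b 4) + (b' 2 - b' 4))
        - (b 0 - b 3)^2*((b 2 - b 4) + (b' 2 - b' 4))
        - 2*(b 0 - b 3)^2*(b 2 + b 4)) = 0 := by
      linear_combination (b 0 - b 3)*G2 + (4*(b 2 + b 4)*((b 2 - b 4) - (b' 2 - b' 4)))*S1
    have KEY : ((b 2 - b 4) - (b' 2 - b' 4)) *
        ((b 0 - b 3) * (b 0 * b 4 + b 2 * b 3 - b 1 * (b 2 + b 4) - 2 * b 5 * (b 2 + b 4))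
          + 2 * (b 2 + b 4) ^ 2 * (b 2 - b 4)) = 0 := by
      linear_combination (-(1:ℝ)/4)*G1p + ((1:ℝ)/4)*G2p
    have ht : (b 2 - b 4) - (b' 2 - b' 4) = 0 := (mul_eq_zero.mp KEY).resolve_right hHa
    have ha2 : b 2 = b' 2 := by linear_combination ((1:ℝ)/2)*ht + ((1:ℝ)/2)*hs2
    have ha4 : b 4 = b' 4 := by linear_combination ((1:ℝ)/2)*hs2 - ((1:ℝ)/2)*ht
    have h5z : (b 0 - b 3) * (b 5 - b' 5) = 0 := by
      linear_combination F1 + (b 2 + b 4)*ht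
    have ha5 : b 5 = b' 5 := sub_eq_zero.mp ((mul_eq_zero.mp h5z).resolve_left hDa)
    have ha0 : b 0 = b' 0 := by linear_combination hs1 - ha5
    have ha3 : b 3 = b' 3 := by linear_combination hs3 - ha5
    have h1z : (b 2 + b 4) * (b 1 - b' 1) = 0 := by
      linear_combination ((1:ℝ)/2)*F2 - (b 2 + b 4)*ha5 - ((b 0 - b 3)/2)*ht
    have ha1 : b 1 = b' 1 := sub_eq_zero.mp ((mul_eq_zero.mp h1z).resolve_left hs2a)
    funext i
    fin_cases i <;> assumption
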